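/- Let n ≥ 1. For the quaternion-type subspace 1̄ := {U ∈ Cl_{p,q} : involute U = −U ∧ reverse U = U}, the real dimension satisfies (as an equality of real numbers) 4 · (Module.finrank ℝ 1̄) = 2^n + 2·(√2)^n · sin(πn/4), i.e. dim 1̄ = 2^{n−2} + 2^{(n−2)/2} sin(πn/4). -/

import Mathlib

open CliffordAlgebra

/-- The quadratic form of signature `(p,q)` on `Fin (p+q) → ℝ`:
`Q(x) = ∑_{i<p} x_i² − ∑_{p≤i<n} x_i²`. -/
noncomputable def Qpq (p q : ℕ) : QuadraticForm ℝ (Fin (p + q) → ℝ) :=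
  QuadraticMap.weightedSumSquares ℝ (fun i : Fin (p + q) => if (i : ℕ) < p then (1 : ℝ) else -1)

/-- The quaternion-type subspace: elements `U` with `involute U = -U` and `reverse U = U`. -/
noncomputable def quatType1 (p q : ℕ) : Submodule ℝ (CliffordAlgebra (Qpq p q)) where
  carrier := {U | involute U = -U ∧ reverse U = U}
  add_mem' := by
    rintro a b ⟨ha1, ha2⟩ ⟨hb1, hb2⟩
    exact ⟨by simp [ha1, hb1]; all_goals abel, by simp [ha2, hb2]; all_goals abel⟩
  zero_mem' := by simp
  smul_mem' := by
    rintro c a ⟨h1, h2⟩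
    exact ⟨by rw [map_smul, h1]; all_goals module, by rw [map_smul, h2]; all_goals module⟩

section QT1ns
open Finset

namespace QT1

variable {n : ℕ} (κ : Fin n → ℝ)

/-- The concrete model: functions on subsets of `Fin n`. -/
abbrev M (n : ℕ) := Finset (Fin n) → ℝ

/-- Sign coefficient for the action of generator `i` on basis vector `S`. -/
noncomputable def c (i : Fin n) (S : Finset (Fin n)) : ℝ :=
  (-1 : ℝ) ^ (S.filter (fun j => j < i)).card * (if i ∈ S then κ i else 1)

/-- The action of the `i`-th generator on the model. -/
noncomputable def Lgen (i : Fin n) : M n →ₗ[ℝ] M n where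
  toFun f := fun T => c κ i (symmDiff T {i}) * f (symmDiff T {i})
  map_add' f g := by ext T; simp [mul_add]
  map_smul' r f := by ext T; simp [smul_eq_mul]; ring

lemma symmDiff_symmDiff_self (T : Finset (Fin n)) (i : Fin n) :
    symmDiff (symmDiff T {i}) {i} = T := by rw [symmDiff_assoc, symmDiff_self, symmDiff_bot]

lemma mem_symmDiff_self {T : Finset (Fin n)} {i : Fin n} :
    i ∈ symmDiff T {i} ↔ i ∉ T := by
  simp [Finset.mem_symmDiff]

lemma mem_symmDiff_other {T : Finset (Fin n)} {i j : Fin n} (h : j ≠ i) :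
    j ∈ symmDiff T {i} ↔ j ∈ T := by
  simp [Finset.mem_symmDiff, h]

lemma filter_symmDiff_lt (T : Finset (Fin n)) (i : Fin n) :
    (symmDiff T {i}).filter (fun j => j < i) = T.filter (fun j => j < i) := by
  ext j
  simp only [Finset.mem_filter, and_congr_left_iff]
  intro hj
  exact mem_symmDiff_other (ne_of_lt hj)

lemma c_symmDiff_mul (i : Fin n) (T : Finset (Fin n)) :
    c κ i (symmDiff T {i}) * c κ i T = κ i := by
  unfold c
  rw [filter_symmDiff_lt]
  rcases em (i ∈ T) with h | h
  · rw [if_pos h, if_neg (fun hx => mem_symmDiff_self.mp hx h)]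
    ring_nf
    rw [pow_mul', neg_one_sq, one_pow, mul_one]
  · rw [if_neg h, if_pos (mem_symmDiff_self.mpr h)]
    ring_nf
    rw [pow_mul', neg_one_sq, one_pow, mul_one]

lemma Lgen_Lgen (i : Fin n) (f : M n) : Lgen κ i (Lgen κ i f) = κ i • f := by
  ext T
  simp only [Lgen, LinearMap.coe_mk, AddHom.coe_mk, Pi.smul_apply, smul_eq_mul,
    symmDiff_symmDiff_self, ← mul_assoc, c_symmDiff_mul]
noncomputable def sgn (i : Fin n) (S : Finset (Fin n)) : ℝ :=
  (-1 : ℝ) ^ (S.filter (fun j => j < i)).card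

lemma c_def (i : Fin n) (S : Finset (Fin n)) :
    c κ i S = sgn i S * (if i ∈ S then κ i else 1) := rfl

lemma symmDiff_singleton_of_mem {T : Finset (Fin n)} {j : Fin n} (h : j ∈ T) :
    symmDiff T {j} = T.erase j := by
  ext x
  simp only [Finset.mem_symmDiff, Finset.mem_erase, Finset.mem_singleton]
  by_cases hx : x = j <;> simp [hx, h]

lemma symmDiff_singleton_of_not_mem {T : Finset (Fin n)} {j : Fin n} (h : j ∉ T) :
    symmDiff T {j} = insert j T := by
  ext x
  simp only [Finset.mem_symmDiff, Finset.mem_insert, Finset.mem_singleton]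
  by_cases hx : x = j <;> simp [hx, h]

lemma sgn_symmDiff_of_lt {i j : Fin n} (h : j < i) (T : Finset (Fin n)) :
    sgn i (symmDiff T {j}) = - sgn i T := by
  by_cases hm : j ∈ T
  · rw [symmDiff_singleton_of_mem hm]
    unfold sgn
    rw [Finset.filter_erase]
    have hmem : j ∈ T.filter (fun x => x < i) := Finset.mem_filter.mpr ⟨hm, h⟩
    rw [← Finset.card_erase_add_one hmem, pow_succ]
    ring
  · rw [symmDiff_singleton_of_not_mem hm]
    unfold sgn
    rw [Finset.filter_insert, if_pos h,
      Finset.card_insert_of_notMem (fun hx => hm (Finset.mem_filter.mp hx).1), pow_succ]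
    ring

lemma sgn_symmDiff_of_not_lt {i j : Fin n} (h : ¬ j < i) (T : Finset (Fin n)) :
    sgn i (symmDiff T {j}) = sgn i T := by
  have : (symmDiff T {j}).filter (fun x => x < i) = T.filter (fun x => x < i) := by
    ext x
    simp only [Finset.mem_filter, and_congr_left_iff]
    intro hx
    exact mem_symmDiff_other (fun e => h (e ▸ hx))
  unfold sgn
  rw [this]

lemma sgn_pair (i j : Fin n) (hij : i ≠ j) (T : Finset (Fin n)) :
    sgn i T * sgn j (symmDiff T {i}) = - (sgn j T * sgn i (symmDiff T {j})) := by
  rcases hij.lt_or_gt with h | h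
  · rw [sgn_symmDiff_of_lt h, sgn_symmDiff_of_not_lt (asymm h)]; ring
  · rw [sgn_symmDiff_of_not_lt (asymm h), sgn_symmDiff_of_lt h]; ring

lemma c_pair (i j : Fin n) (hij : i ≠ j) (T : Finset (Fin n)) :
    c κ i (symmDiff T {i}) * c κ j (symmDiff (symmDiff T {i}) {j})
      = - (c κ j (symmDiff T {j}) * c κ i (symmDiff (symmDiff T {j}) {i})) := by
  have hji : j ≠ i := hij.symm
  have hv : (if j ∈ symmDiff (symmDiff T {i}) {j} then κ j else 1)
      = (if j ∈ symmDiff T {j} then κ j else 1) := by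
    by_cases h : j ∈ T <;> simp [mem_symmDiff_self, mem_symmDiff_other hji, h]
  have hu : (if i ∈ symmDiff (symmDiff T {j}) {i} then κ i else 1)
      = (if i ∈ symmDiff T {i} then κ i else 1) := by
    by_cases h : i ∈ T <;> simp [mem_symmDiff_self, mem_symmDiff_other hij, h]
  simp only [c_def]
  rw [hv, hu, sgn_symmDiff_of_not_lt (lt_irrefl i) T,
    sgn_symmDiff_of_not_lt (lt_irrefl j) (symmDiff T {i}),
    sgn_symmDiff_of_not_lt (lt_irrefl j) T,
    sgn_symmDiff_of_not_lt (lt_irrefl i) (symmDiff T {j})]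
  have := sgn_pair i j hij T
  linear_combination ((if i ∈ symmDiff T {i} then κ i else 1) *
    (if j ∈ symmDiff T {j} then κ j else 1)) * this

lemma Lgen_apply (i : Fin n) (f : M n) (T : Finset (Fin n)) :
    Lgen κ i f T = c κ i (symmDiff T {i}) * f (symmDiff T {i}) := rfl

lemma Lgen_anticomm {i j : Fin n} (hij : i ≠ j) (f : M n) :
    Lgen κ i (Lgen κ j f) = - Lgen κ j (Lgen κ i f) := by
  ext T
  have harg : symmDiff (symmDiff T {i}) {j} = symmDiff (symmDiff T {j}) {i} := by
    rw [symmDiff_assoc, symmDiff_assoc, symmDiff_comm ({i} : Finset (Fin n)) {j}]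
  simp only [Lgen_apply, Pi.neg_apply]
  rw [← mul_assoc, ← mul_assoc, c_pair κ i j hij T, harg]
  ring

/-- The linear map `v ↦ ∑ vᵢ • Lᵢ`. -/
noncomputable def Lmap : (Fin n → ℝ) →ₗ[ℝ] (M n →ₗ[ℝ] M n) where
  toFun v := ∑ i, v i • Lgen κ i
  map_add' v w := by simp [add_smul, Finset.sum_add_distrib]
  map_smul' r v := by simp [mul_smul, Finset.smul_sum]

lemma diag_sum {ι G : Type*} [Fintype ι] [AddCommGroup G] [Module ℝ G]
    (a : ι → ι → G) (h : ∀ i j, i ≠ j → a i j + a j i = 0) :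
    ∑ i, ∑ j, a i j = ∑ i, a i i := by
  have h2 : (2 : ℝ) • (∑ i, ∑ j, a i j) = (2 : ℝ) • ∑ i, a i i := by
    have hc : (∑ i, ∑ j, a j i) = ∑ i, ∑ j, a i j := Finset.sum_comm
    calc (2 : ℝ) • (∑ i, ∑ j, a i j)
        = (∑ i, ∑ j, a i j) + ∑ i, ∑ j, a j i := by rw [hc, two_smul]
      _ = ∑ i, ∑ j, (a i j + a j i) := by
          rw [← Finset.sum_add_distrib]
          refine Finset.sum_congr rfl fun i _ => ?_
          rw [← Finset.sum_add_distrib]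
      _ = ∑ i, (a i i + a i i) := by
          refine Finset.sum_congr rfl fun i _ => ?_
          exact Finset.sum_eq_single i (fun j _ hj => h i j (fun e => hj e.symm)) (by simp)
      _ = (2 : ℝ) • ∑ i, a i i := by
          rw [Finset.smul_sum]
          refine Finset.sum_congr rfl fun i _ => ?_
          rw [two_smul]
  exact smul_right_injective G two_ne_zero h2

lemma Lmap_apply (v : Fin n → ℝ) (f : M n) :
    Lmap κ v f = ∑ i, v i • Lgen κ i f := by
  simp [Lmap]

lemma Lmap_sq_apply (v : Fin n → ℝ) (f : M n) :
    Lmap κ v (Lmap κ v f) = (∑ i, κ i * (v i * v i)) • f := by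
  rw [Lmap_apply, Lmap_apply]
  have step : ∀ i, Lgen κ i (∑ j, v j • Lgen κ j f) = ∑ j, v j • Lgen κ i (Lgen κ j f) := by
    intro i; rw [map_sum]; exact Finset.sum_congr rfl fun j _ => map_smul _ _ _
  calc ∑ i, v i • Lgen κ i (∑ j, v j • Lgen κ j f)
      = ∑ i, ∑ j, (v i * v j) • Lgen κ i (Lgen κ j f) := by
        refine Finset.sum_congr rfl fun i _ => ?_
        rw [step, Finset.smul_sum]
        exact Finset.sum_congr rfl fun j _ => by rw [smul_smul]
    _ = ∑ i, (v i * v i) • Lgen κ i (Lgen κ i f) := by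
        refine diag_sum _ fun i j hij => ?_
        rw [Lgen_anticomm κ hij, mul_comm (v i)]
        simp
    _ = (∑ i, κ i * (v i * v i)) • f := by
        rw [Finset.sum_smul]
        refine Finset.sum_congr rfl fun i _ => ?_
        rw [Lgen_Lgen, smul_smul, mul_comm]

/-- The representation of the Clifford algebra on the model. -/
noncomputable def φ : CliffordAlgebra (QuadraticMap.weightedSumSquares ℝ κ)
    →ₐ[ℝ] Module.End ℝ (M n) :=
  CliffordAlgebra.lift _ ⟨Lmap κ, fun v => by
    refine LinearMap.ext fun f => ?_
    rw [Module.End.mul_apply, Lmap_sq_apply, Module.algebraMap_end_apply,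
      QuadraticMap.weightedSumSquares_apply]
    simp [smul_eq_mul]⟩

lemma φ_ι (v : Fin n → ℝ) : φ κ (ι _ v) = Lmap κ v := CliffordAlgebra.lift_ι_apply _ _ _

/-! ### Basis of the Clifford algebra -/

/-- standard basis vector of `Fin n → ℝ`. -/
noncomputable def ev (i : Fin n) : Fin n → ℝ := Pi.single i 1

/-- generator of the Clifford algebra. -/
noncomputable def g (i : Fin n) :
    CliffordAlgebra (QuadraticMap.weightedSumSquares ℝ κ) := ι _ (ev i)

/-- ordered product of generators over a finset. -/
noncomputable def bv (S : Finset (Fin n)) :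
    CliffordAlgebra (QuadraticMap.weightedSumSquares ℝ κ) :=
  ((S.sort (· ≤ ·)).map (g κ)).prod

/-- delta function in the model. -/
noncomputable def δ (S : Finset (Fin n)) : M n := Pi.single S 1

lemma bv_empty : bv κ ∅ = 1 := by simp [bv, Finset.sort_empty]

lemma bv_singleton (i : Fin n) : bv κ {i} = g κ i := by
  simp [bv, Finset.sort_singleton]

lemma Q_ev (i : Fin n) : QuadraticMap.weightedSumSquares ℝ κ (ev i) = κ i := by
  rw [QuadraticMap.weightedSumSquares_apply]
  rw [Fintype.sum_eq_single i (fun j hj => by simp [ev, Pi.single_eq_of_ne hj])]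
  simp [ev]

lemma Q_ev_add {i j : Fin n} (hij : i ≠ j) :
    QuadraticMap.weightedSumSquares ℝ κ (ev i + ev j) = κ i + κ j := by
  rw [QuadraticMap.weightedSumSquares_apply]
  rw [Fintype.sum_eq_add i j hij (fun k hk => by
    simp [ev, Pi.single_eq_of_ne hk.1, Pi.single_eq_of_ne hk.2])]
  simp [ev, Pi.single_eq_of_ne hij, Pi.single_eq_of_ne (Ne.symm hij)]

lemma g_sq (i : Fin n) : g κ i * g κ i = algebraMap ℝ _ (κ i) := by
  rw [g, CliffordAlgebra.ι_sq_scalar, Q_ev]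

lemma g_anticomm {i j : Fin n} (hij : i ≠ j) : g κ i * g κ j = -(g κ j * g κ i) :=
  CliffordAlgebra.ι_mul_ι_comm_of_isOrtho
    (QuadraticMap.isOrtho_def.mpr (by rw [Q_ev_add κ hij, Q_ev, Q_ev]))

lemma sorted_prod_eq_bv (l : List (Fin n)) (hl : l.Pairwise (· < ·)) :
    (l.map (g κ)).prod = bv κ l.toFinset := by
  rw [bv, (List.toFinset_sort (· ≤ ·) hl.nodup).mpr (hl.imp le_of_lt)]

lemma Lmap_ev (i : Fin n) : Lmap κ (ev i) = Lgen κ i := by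
  show ∑ j, ev i j • Lgen κ j = Lgen κ i
  rw [Fintype.sum_eq_single i (fun j hj => by simp [ev, Pi.single_eq_of_ne hj])]
  simp [ev]

lemma Lgen_δ {i : Fin n} {T : Finset (Fin n)} (h : ∀ x ∈ T, i < x) :
    Lgen κ i (δ T) = δ (insert i T) := by
  have hiT : i ∉ T := fun hi => lt_irrefl i (h i hi)
  ext U
  rw [Lgen_apply]
  by_cases hU : U = insert i T
  · subst hU
    have harg : symmDiff (insert i T) {i} = T := by
      rw [← symmDiff_singleton_of_not_mem hiT, symmDiff_symmDiff_self]
    rw [harg]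
    have hc : c κ i T = 1 := by
      rw [c_def, if_neg hiT, sgn]
      have : T.filter (fun j => j < i) = ∅ :=
        Finset.filter_eq_empty_iff.mpr (fun {x} hx => asymm (h x hx))
      rw [this]
      simp
    simp [hc, δ]
  · have harg : symmDiff U {i} ≠ T := by
      intro e
      apply hU
      rw [← symmDiff_symmDiff_self U i, e, symmDiff_singleton_of_not_mem hiT]
    simp [δ, Pi.single_apply, harg, hU]

lemma φ_sorted (l : List (Fin n)) (hl : l.Pairwise (· < ·)) :
    φ κ ((l.map (g κ)).prod) (δ ∅) = δ l.toFinset := by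
  induction l with
  | nil => simp [δ]
  | cons i t ih =>
    obtain ⟨hit, ht⟩ := List.pairwise_cons.mp hl
    rw [List.map_cons, List.prod_cons, map_mul, Module.End.mul_apply, ih ht, g, φ_ι,
      Lmap_ev, Lgen_δ κ (fun x hx => hit x (List.mem_toFinset.mp hx)), List.toFinset_cons]

lemma φ_bv (S : Finset (Fin n)) : φ κ (bv κ S) (δ ∅) = δ S := by
  rw [bv, φ_sorted κ _ ((Finset.sortedLT_sort S).pairwise), Finset.sort_toFinset]

/-- evaluation at the vacuum. -/
noncomputable def θ : CliffordAlgebra (QuadraticMap.weightedSumSquares ℝ κ) →ₗ[ℝ] M n where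
  toFun U := φ κ U (δ ∅)
  map_add' a b := by simp only [map_add, LinearMap.add_apply]
  map_smul' r a := by simp only [map_smul, LinearMap.smul_apply, RingHom.id_apply]

lemma θ_bv (S : Finset (Fin n)) : θ κ (bv κ S) = δ S := φ_bv κ S

lemma bv_linearIndependent : LinearIndependent ℝ (bv κ) := by
  apply LinearIndependent.of_comp (θ κ)
  have : (θ κ) ∘ (bv κ) = fun S => (Pi.basisFun ℝ (Finset (Fin n))) S := by
    ext S T
    rw [Function.comp_apply, θ_bv, Pi.basisFun_apply]
    rfl
  rw [this]
  exact (Pi.basisFun ℝ (Finset (Fin n))).linearIndependent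
/-! ### Spanning -/

/-- span of the ordered products. -/
noncomputable def P : Submodule ℝ (CliffordAlgebra (QuadraticMap.weightedSumSquares ℝ κ)) :=
  Submodule.span ℝ (Set.range (bv κ))

lemma bv_mem_P (S : Finset (Fin n)) : bv κ S ∈ P κ :=
  Submodule.subset_span ⟨S, rfl⟩

lemma bv_insert_of_lt {j : Fin n} {T : Finset (Fin n)} (h : ∀ x ∈ T, j < x) :
    g κ j * bv κ T = bv κ (insert j T) := by
  have hjT : j ∉ T := fun hj => lt_irrefl j (h j hj)
  rw [bv, bv, Finset.sort_insert (· ≤ ·) (fun b hb => le_of_lt (h b hb)) hjT,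
    List.map_cons, List.prod_cons]

lemma g_mul_sorted (i : Fin n) (l : List (Fin n)) (hl : l.Pairwise (· < ·)) :
    ∃ (r : ℝ) (T : Finset (Fin n)), (∀ x ∈ T, x = i ∨ x ∈ l) ∧
      g κ i * (l.map (g κ)).prod = r • bv κ T := by
  induction l with
  | nil =>
    exact ⟨1, {i}, by simp, by simp [bv_singleton]⟩
  | cons j t ih =>
    obtain ⟨hjt, ht⟩ := List.pairwise_cons.mp hl
    rcases lt_trichotomy i j with h | h | h
    · refine ⟨1, (i :: j :: t).toFinset, by simp, ?_⟩
      have hs : (i :: j :: t).Pairwise (· < ·) :=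
        List.pairwise_cons.mpr ⟨by
          intro b hb
          rcases List.mem_cons.mp hb with e | hb'
          · exact e ▸ h
          · exact h.trans (hjt b hb'), hl⟩
      rw [one_smul, ← sorted_prod_eq_bv κ _ hs, List.map_cons, List.prod_cons,
        List.map_cons, List.prod_cons, List.map_cons, List.prod_cons]
    · subst h
      refine ⟨κ i, t.toFinset, fun x hx => Or.inr (List.mem_cons_of_mem _
        (List.mem_toFinset.mp hx)), ?_⟩
      rw [List.map_cons, List.prod_cons, ← mul_assoc, g_sq, ← sorted_prod_eq_bv κ t ht,
        ← Algebra.smul_def]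
    · obtain ⟨r, T, hT, heq⟩ := ih ht
      have hjT : ∀ x ∈ T, j < x := fun x hx =>
        (hT x hx).elim (fun e => e ▸ h) (fun hx' => hjt x hx')
      refine ⟨-r, insert j T, ?_, ?_⟩
      · intro x hx
        rcases Finset.mem_insert.mp hx with e | hx'
        · exact Or.inr (e ▸ List.mem_cons_self)
        · exact (hT x hx').imp id (List.mem_cons_of_mem _)
      · rw [List.map_cons, List.prod_cons, ← mul_assoc, g_anticomm κ (ne_of_gt h),
          neg_mul, mul_assoc, heq, mul_smul_comm, bv_insert_of_lt κ hjT, ← neg_smul]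

lemma g_mul_mem (i : Fin n) {x} (hx : x ∈ P κ) : g κ i * x ∈ P κ := by
  induction hx using Submodule.span_induction with
  | mem y hy =>
    obtain ⟨S, rfl⟩ := hy
    obtain ⟨r, T, -, heq⟩ := g_mul_sorted κ i (S.sort (· ≤ ·)) ((Finset.sortedLT_sort S).pairwise)
    rw [bv, heq]
    exact Submodule.smul_mem _ _ (bv_mem_P κ T)
  | zero => simp [Submodule.zero_mem]
  | add y z _ _ hy hz => rw [mul_add]; exact Submodule.add_mem _ hy hz
  | smul r y _ hy => rw [mul_smul_comm]; exact Submodule.smul_mem _ _ hy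

lemma prodl_mul_mem (l : List (Fin n)) {x} (hx : x ∈ P κ) :
    (l.map (g κ)).prod * x ∈ P κ := by
  induction l with
  | nil => simpa using hx
  | cons i t ih => rw [List.map_cons, List.prod_cons, mul_assoc]; exact g_mul_mem κ i ih

lemma mul_mem_P {x y} (hx : x ∈ P κ) (hy : y ∈ P κ) : x * y ∈ P κ := by
  induction hx using Submodule.span_induction with
  | mem z hz =>
    obtain ⟨S, rfl⟩ := hz
    exact prodl_mul_mem κ _ hy
  | zero => simp [Submodule.zero_mem]
  | add a b _ _ ha hb => rw [add_mul]; exact Submodule.add_mem _ ha hb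
  | smul r a _ ha => rw [smul_mul_assoc]; exact Submodule.smul_mem _ _ ha

lemma mem_P (x : CliffordAlgebra (QuadraticMap.weightedSumSquares ℝ κ)) : x ∈ P κ := by
  induction x using CliffordAlgebra.induction with
  | algebraMap r =>
    rw [Algebra.algebraMap_eq_smul_one, ← bv_empty κ]
    exact Submodule.smul_mem _ _ (bv_mem_P κ ∅)
  | ι v =>
    have hv : v = ∑ i, v i • ev i := by
      ext x
      rw [Finset.sum_apply]
      simp [ev, Pi.single_apply]
    rw [hv, map_sum]
    refine Submodule.sum_mem _ fun i _ => ?_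
    rw [map_smul]
    exact Submodule.smul_mem _ _ (show g κ i ∈ P κ from bv_singleton κ i ▸ bv_mem_P κ {i})
  | mul a b ha hb => exact mul_mem_P κ ha hb
  | add a b ha hb => exact Submodule.add_mem _ ha hb

lemma P_eq_top : P κ = ⊤ := eq_top_iff.mpr fun x _ => mem_P κ x

/-- The basis of the Clifford algebra by ordered products of generators. -/
noncomputable def Bcl : Module.Basis (Finset (Fin n)) ℝ
    (CliffordAlgebra (QuadraticMap.weightedSumSquares ℝ κ)) :=
  Module.Basis.mk (bv_linearIndependent κ) (by rw [← P, P_eq_top])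

lemma Bcl_apply (S : Finset (Fin n)) : Bcl κ S = bv κ S := Module.Basis.mk_apply _ _ _
/-! ### Involute and reverse on the basis -/

lemma involute_prod (l : List (Fin n)) :
    involute ((l.map (g κ)).prod) = ((-1 : ℝ) ^ l.length) • (l.map (g κ)).prod := by
  induction l with
  | nil => simp
  | cons i t ih =>
    rw [List.map_cons, List.prod_cons, map_mul, ih, g, CliffordAlgebra.involute_ι,
      List.length_cons, pow_succ, neg_mul, mul_smul_comm, mul_neg_one, neg_smul]

lemma involute_bv (S : Finset (Fin n)) :
    involute (bv κ S) = ((-1 : ℝ) ^ S.card) • bv κ S := by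
  rw [bv, involute_prod, Finset.length_sort]

lemma comm_move (x : Fin n) (t : List (Fin n)) (h : ∀ y ∈ t, y ≠ x) :
    (t.map (g κ)).prod * g κ x = ((-1 : ℝ) ^ t.length) • (g κ x * (t.map (g κ)).prod) := by
  induction t with
  | nil => simp
  | cons y s ih =>
    have hys : ∀ z ∈ s, z ≠ x := fun z hz => h z (List.mem_cons_of_mem _ hz)
    rw [List.map_cons, List.prod_cons, mul_assoc, ih hys, mul_smul_comm, ← mul_assoc,
      g_anticomm κ (h y (List.mem_cons_self)), List.length_cons, pow_succ]
    rw [neg_mul, mul_assoc, smul_neg, ← neg_smul, mul_neg_one]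

lemma reverse_prod_sorted (l : List (Fin n)) (hl : l.Pairwise (· < ·)) :
    reverse ((l.map (g κ)).prod)
      = ((-1 : ℝ) ^ (l.length.choose 2)) • (l.map (g κ)).prod := by
  induction l with
  | nil => simp
  | cons x t ih =>
    obtain ⟨hxt, ht⟩ := List.pairwise_cons.mp hl
    have hch : (t.length + 1).choose 2 = t.length.choose 2 + t.length := by
      rw [Nat.choose_succ_succ, Nat.choose_one_right, Nat.add_comm]
    rw [List.map_cons, List.prod_cons, CliffordAlgebra.reverse.map_mul, ih ht, g,
      CliffordAlgebra.reverse_ι, ← g, smul_mul_assoc,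
      comm_move κ x t (fun y hy => (hxt y hy).ne'), smul_smul, ← pow_add,
      List.length_cons, hch]

lemma reverse_bv (S : Finset (Fin n)) :
    reverse (bv κ S) = ((-1 : ℝ) ^ (S.card.choose 2)) • bv κ S := by
  rw [bv, reverse_prod_sorted κ _ ((Finset.sortedLT_sort S).pairwise), Finset.length_sort]

/-! ### The quaternion-type subspace -/

lemma card_mod_four {k : ℕ} (h1 : Odd k) (h2 : Even (k.choose 2)) : k % 4 = 1 := by
  obtain ⟨a, ha⟩ := h1
  have hk2 : k.choose 2 = (2 * a + 1) * a := by
    rw [Nat.choose_two_right, ha, Nat.add_sub_cancel]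
    rw [show (2 * a + 1) * (2 * a) = 2 * ((2 * a + 1) * a) by ring]
    exact Nat.mul_div_cancel_left _ two_pos
  rw [hk2, Nat.even_mul] at h2
  have ha2 : Even a := by
    rcases h2 with h | h
    · obtain ⟨c, hc⟩ := h; omega
    · exact h
  obtain ⟨b, hb⟩ := ha2
  omega

lemma mod_four_card {k : ℕ} (h : k % 4 = 1) : Odd k ∧ Even (k.choose 2) := by
  obtain ⟨m, hm⟩ : ∃ m, k = 4 * m + 1 := ⟨k / 4, by omega⟩
  constructor
  · exact ⟨2 * m, by omega⟩
  · have : k.choose 2 = (4 * m + 1) * (2 * m) := by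
      rw [Nat.choose_two_right, hm]
      rw [show (4 * m + 1) * (4 * m + 1 - 1) = 2 * ((4 * m + 1) * (2 * m)) from by
        rw [Nat.add_sub_cancel]; ring]
      exact Nat.mul_div_cancel_left _ two_pos
    rw [this]
    exact ⟨(4 * m + 1) * m, by ring⟩

lemma quat_eq_span (W : Submodule ℝ (CliffordAlgebra (QuadraticMap.weightedSumSquares ℝ κ)))
    (hW : ∀ U, U ∈ W ↔ (involute U = -U ∧ reverse U = U)) :
    W = Submodule.span ℝ (Bcl κ '' {S | S.card % 4 = 1}) := by
  apply le_antisymm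
  · intro U hU
    obtain ⟨h1, h2⟩ := (hW U).mp hU
    rw [(Bcl κ).mem_span_image]
    intro S hS
    have hS' : (Bcl κ).repr U S ≠ 0 := Finsupp.mem_support_iff.mp hS
    -- compute repr of involute U and reverse U
    have hrepr : ∀ (sgn : Finset (Fin n) → ℝ)
        (hs : ∀ T, involute ((Bcl κ).repr U T • Bcl κ T) = (sgn T * (Bcl κ).repr U T) • Bcl κ T)
        , True := fun _ _ => trivial
    have key1 : ∀ T, (-1 : ℝ) ^ T.card * (Bcl κ).repr U T = - (Bcl κ).repr U T := by
      have : involute U = ∑ T, ((-1 : ℝ) ^ T.card * (Bcl κ).repr U T) • Bcl κ T := by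
        conv_lhs => rw [← (Bcl κ).sum_repr U]
        rw [map_sum]
        refine Finset.sum_congr rfl fun T _ => ?_
        rw [map_smul, Bcl_apply, involute_bv, smul_smul, mul_comm, ← Bcl_apply]
      intro T
      have hsum : (∑ T, ((-1 : ℝ) ^ T.card * (Bcl κ).repr U T) • Bcl κ T)
          = ∑ T, (-((Bcl κ).repr U T)) • Bcl κ T := by
        rw [← this, h1]
        conv_lhs => rw [← (Bcl κ).sum_repr U]
        rw [← Finset.sum_neg_distrib]
        exact Finset.sum_congr rfl fun T _ => (neg_smul _ _).symm
      have e3 : (fun T => (-1 : ℝ) ^ T.card * (Bcl κ).repr U T)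
          = fun T => -((Bcl κ).repr U T) := by
        calc (fun T => (-1 : ℝ) ^ T.card * (Bcl κ).repr U T)
            = ⇑((Bcl κ).repr (∑ T, ((-1 : ℝ) ^ T.card * (Bcl κ).repr U T) • Bcl κ T)) :=
              ((Bcl κ).repr_sum_self _).symm
          _ = ⇑((Bcl κ).repr (∑ T, (-((Bcl κ).repr U T)) • Bcl κ T)) := by rw [hsum]
          _ = fun T => -((Bcl κ).repr U T) := (Bcl κ).repr_sum_self _
      exact congrFun e3 T
    have key2 : ∀ T, (-1 : ℝ) ^ (T.card.choose 2) * (Bcl κ).repr U T = (Bcl κ).repr U T := by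
      have : reverse U = ∑ T, ((-1 : ℝ) ^ (T.card.choose 2) * (Bcl κ).repr U T) • Bcl κ T := by
        conv_lhs => rw [← (Bcl κ).sum_repr U]
        rw [map_sum]
        refine Finset.sum_congr rfl fun T _ => ?_
        rw [map_smul, Bcl_apply, reverse_bv, smul_smul, mul_comm, ← Bcl_apply]
      intro T
      have hsum : (∑ T, ((-1 : ℝ) ^ (T.card.choose 2) * (Bcl κ).repr U T) • Bcl κ T)
          = ∑ T, ((Bcl κ).repr U T) • Bcl κ T := by
        rw [← this, h2]
        conv_lhs => rw [← (Bcl κ).sum_repr U]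
      have e3 : (fun T => (-1 : ℝ) ^ (T.card.choose 2) * (Bcl κ).repr U T)
          = fun T => ((Bcl κ).repr U T) := by
        calc (fun T => (-1 : ℝ) ^ (T.card.choose 2) * (Bcl κ).repr U T)
            = ⇑((Bcl κ).repr (∑ T, ((-1 : ℝ) ^ (T.card.choose 2) * (Bcl κ).repr U T) • Bcl κ T)) :=
              ((Bcl κ).repr_sum_self _).symm
          _ = ⇑((Bcl κ).repr (∑ T, ((Bcl κ).repr U T) • Bcl κ T)) := by rw [hsum]
          _ = fun T => ((Bcl κ).repr U T) := (Bcl κ).repr_sum_self _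
      exact congrFun e3 T
    -- deduce parity conditions
    have hodd : Odd S.card := by
      by_contra hco
      rw [Nat.not_odd_iff_even] at hco
      have := key1 S
      rw [hco.neg_one_pow, one_mul] at this
      exact hS' (by linarith)
    have heven : Even (S.card.choose 2) := by
      by_contra hco
      rw [Nat.not_even_iff_odd] at hco
      have := key2 S
      rw [hco.neg_one_pow, neg_one_mul] at this
      exact hS' (by linarith)
    exact card_mod_four hodd heven
  · rw [Submodule.span_le]
    rintro _ ⟨S, hS, rfl⟩
    rw [SetLike.mem_coe, hW, Bcl_apply]
    obtain ⟨hodd, heven⟩ := mod_four_card hS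
    constructor
    · rw [involute_bv, hodd.neg_one_pow, neg_one_smul]
    · rw [reverse_bv, heven.neg_one_pow, one_smul]

lemma finrank_quat (W : Submodule ℝ (CliffordAlgebra (QuadraticMap.weightedSumSquares ℝ κ)))
    (hW : ∀ U, U ∈ W ↔ (involute U = -U ∧ reverse U = U)) :
    Module.finrank ℝ W
      = (Finset.univ.filter (fun S : Finset (Fin n) => S.card % 4 = 1)).card := by
  rw [quat_eq_span κ W hW]
  have himg : Bcl κ '' {S | S.card % 4 = 1}
      = Set.range ((Bcl κ) ∘ (Subtype.val : {S : Finset (Fin n) // S.card % 4 = 1} → _)) := by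
    rw [Set.range_comp, Subtype.range_coe_subtype]
  rw [himg, finrank_span_eq_card
    ((Bcl κ).linearIndependent.comp Subtype.val Subtype.val_injective),
    Fintype.card_subtype]
/-! ### Counting -/

/-- number of subsets with cardinality `≡ k [MOD 4]`. -/
def Nc (n k : ℕ) : ℕ :=
  (Finset.univ.filter (fun S : Finset (Fin n) => S.card % 4 = k)).card

lemma sum_pow_card (n : ℕ) (x : ℂ) :
    ∑ S : Finset (Fin n), x ^ S.card = (1 + x) ^ n := by
  have h := Finset.prod_add (fun _ : Fin n => x) (fun _ => (1 : ℂ)) Finset.univ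
  simp only [Finset.prod_const, one_pow, mul_one, Finset.powerset_univ, Finset.card_univ,
    Fintype.card_fin] at h
  rw [add_comm, ← h]

lemma class_sum (n : ℕ) (x : ℂ) (hx : x ^ 4 = 1) :
    (1 + x) ^ n = Nc n 0 + Nc n 1 * x + Nc n 2 * x ^ 2 + Nc n 3 * x ^ 3 := by
  rw [← sum_pow_card n x]
  have hmod : ∀ k : ℕ, x ^ k = x ^ (k % 4) := by
    intro k
    conv_lhs => rw [← Nat.div_add_mod k 4]
    rw [pow_add, pow_mul, hx, one_pow, one_mul]
  calc ∑ S : Finset (Fin n), x ^ S.card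
      = ∑ S : Finset (Fin n), x ^ (S.card % 4) :=
        Finset.sum_congr rfl fun S _ => hmod _
    _ = ∑ k ∈ Finset.range 4, ∑ S ∈ Finset.univ.filter
          (fun S : Finset (Fin n) => S.card % 4 = k), x ^ k :=
        (Finset.sum_fiberwise_of_maps_to'
          (fun S _ => Finset.mem_range.mpr (Nat.mod_lt _ (by norm_num))) _).symm
    _ = ∑ k ∈ Finset.range 4, (Nc n k : ℂ) * x ^ k := by
        refine Finset.sum_congr rfl fun k _ => ?_
        rw [Finset.sum_const, Nc, nsmul_eq_mul]
    _ = _ := by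
        rw [show (4 : ℕ) = 3 + 1 from rfl, Finset.sum_range_succ, Finset.sum_range_succ,
          Finset.sum_range_succ, Finset.sum_range_one]
        ring

lemma one_add_I_pow_im (n : ℕ) :
    ((1 + Complex.I) ^ n).im = Real.sqrt 2 ^ n * Real.sin (Real.pi * n / 4) := by
  have hss : Real.sqrt 2 * Real.sqrt 2 = 2 := Real.mul_self_sqrt (by norm_num)
  have h1 : (1 + Complex.I) = (Real.sqrt 2 : ℝ) * Complex.exp ((Real.pi / 4 : ℝ) * Complex.I) := by
    rw [Complex.exp_mul_I, ← Complex.ofReal_cos, ← Complex.ofReal_sin,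
      Real.cos_pi_div_four, Real.sin_pi_div_four]
    apply Complex.ext
    · simp only [Complex.add_re, Complex.one_re, Complex.I_re, Complex.mul_re,
        Complex.ofReal_re, Complex.ofReal_im, Complex.add_im, Complex.mul_im,
        Complex.I_im]
      nlinarith
    · simp only [Complex.add_im, Complex.one_im, Complex.I_im, Complex.mul_im,
        Complex.ofReal_re, Complex.ofReal_im, Complex.add_re, Complex.mul_re,
        Complex.I_re]
      nlinarith
  rw [h1, mul_pow, ← Complex.ofReal_pow, ← Complex.exp_nat_mul]
  have harg : (n : ℂ) * ((Real.pi / 4 : ℝ) * Complex.I) = (Real.pi * n / 4 : ℝ) * Complex.I := by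
    push_cast
    ring
  rw [harg, Complex.exp_mul_I, ← Complex.ofReal_cos, ← Complex.ofReal_sin]
  simp only [Complex.mul_im, Complex.add_im, Complex.add_re, Complex.ofReal_re,
    Complex.ofReal_im, Complex.mul_re, Complex.I_re, Complex.I_im]
  ring

lemma count_formula (n : ℕ) (hn : 1 ≤ n) :
    4 * ((Finset.univ.filter (fun S : Finset (Fin n) => S.card % 4 = 1)).card : ℝ)
      = 2 ^ n + 2 * Real.sqrt 2 ^ n * Real.sin (Real.pi * n / 4) := by
  have E1 := class_sum n 1 (by norm_num)
  have E2 := class_sum n (-1) (by norm_num)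
  have E3 := class_sum n Complex.I Complex.I_pow_four
  norm_num at E1 E2 E3
  rw [zero_pow (show n ≠ 0 by omega)] at E2
  have R1 : (2 : ℝ) ^ n = Nc n 0 + Nc n 1 + Nc n 2 + Nc n 3 := by exact_mod_cast E1
  have RZ : (0 : ℤ) = Nc n 0 + -(Nc n 1 : ℤ) + Nc n 2 + -(Nc n 3 : ℤ) := by exact_mod_cast E2
  have R2 : (0 : ℝ) = (Nc n 0 : ℝ) + -(Nc n 1 : ℝ) + Nc n 2 + -(Nc n 3 : ℝ) := by
    exact_mod_cast RZ
  have hI3 : Complex.I ^ 3 = -Complex.I := by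
    rw [pow_succ, Complex.I_sq]; ring
  have R3 : ((1 + Complex.I) ^ n).im = (Nc n 1 : ℝ) - Nc n 3 := by
    have := congrArg Complex.im E3
    simp at this
    linarith [this]
  rw [one_add_I_pow_im] at R3
  show 4 * ((Nc n 1 : ℕ) : ℝ) = 2 ^ n + 2 * Real.sqrt 2 ^ n * Real.sin (Real.pi * n / 4)
  linarith [R1, R2, R3]

end QT1

end QT1ns

/-- `4 · dim = 2^n + 2·(√2)^n·sin(πn/4)`. -/
theorem statement1 (p q : ℕ) (hn : 1 ≤ p + q) :
    4 * (Module.finrank ℝ (quatType1 p q) : ℝ) =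
      2 ^ (p + q) + 2 * Real.sqrt 2 ^ (p + q) * Real.sin (Real.pi * (p + q) / 4) := by
  have hfr : Module.finrank ℝ (quatType1 p q)
      = (Finset.univ.filter (fun S : Finset (Fin (p + q)) => S.card % 4 = 1)).card :=
    QT1.finrank_quat _ (quatType1 p q) (fun U => Iff.rfl)
  rw [hfr]
  have h := QT1.count_formula (p + q) hn
  push_cast at h ⊢
  linarith [h]
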